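/- Let α be irrational and φ_t(x, y) = (x + t·α, y + t) mod 1 the linear flow on the flat torus ℝ²/ℤ². If α is not badly approximable (i.e., inf_{q≥1} q·‖qα‖ = 0), then the flow φ is not superdense: for every c > 0 there exist a starting point and a T > 0 such that the orbit segment of time length cT is not 1/T-dense. -/

import Mathlib

/-- The quotient metric on the torus ℝ²/ℤ², expressed on representatives. -/
noncomputable def torusDist (p q : ℝ × ℝ) : ℝ :=
  ⨅ m : ℤ × ℤ, Real.sqrt ((p.1 - q.1 - m.1) ^ 2 + (p.2 - q.2 - m.2) ^ 2)

/-- Distance from a real number to the nearest integer. -/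
noncomputable def nint (y : ℝ) : ℝ := |y - round y|

lemma nint_nonneg (y : ℝ) : 0 ≤ nint y := abs_nonneg _

lemma nint_le (y : ℝ) (m : ℤ) : nint y ≤ |y - m| := by
  unfold nint
  rcases eq_or_ne (round y) m with h | h
  · rw [h]
  · have h1 : (1:ℝ) ≤ |(round y : ℝ) - m| := by
      have hne : round y - m ≠ 0 := sub_ne_zero.mpr h
      calc (1:ℝ) ≤ ((|round y - m| : ℤ) : ℝ) := by exact_mod_cast Int.one_le_abs hne
        _ = |(round y : ℝ) - m| := by push_cast; rfl
    have h2 : |y - round y| ≤ 1/2 := abs_sub_round y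
    have h3 : |(round y:ℝ) - m| ≤ |(round y:ℝ) - y| + |y - m| := abs_sub_le _ _ _
    have h4 : |(round y:ℝ) - y| = |y - round y| := abs_sub_comm _ _
    linarith

lemma nint_add (x y : ℝ) : nint (x + y) ≤ nint x + nint y := by
  calc nint (x+y) ≤ |x + y - ((round x + round y : ℤ) : ℝ)| := nint_le _ _
    _ = |(x - round x) + (y - round y)| := by push_cast; ring_nf
    _ ≤ |x - round x| + |y - round y| := abs_add_le _ _
    _ = nint x + nint y := rfl

lemma nint_neg (x : ℝ) : nint (-x) = nint x := by
  have h1 : nint (-x) ≤ |(-x) - ((-(round x) : ℤ) : ℝ)| := nint_le _ _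
  have h2 : nint x ≤ |x - ((-(round (-x)) : ℤ) : ℝ)| := nint_le _ _
  have e1 : |(-x) - ((-(round x) : ℤ) : ℝ)| = nint x := by
    unfold nint; push_cast; rw [show -x - -(round x : ℝ) = -(x - round x) by ring, abs_neg]
  have e2 : |x - ((-(round (-x)) : ℤ) : ℝ)| = nint (-x) := by
    unfold nint; push_cast; rw [show x - -(round (-x) : ℝ) = -((-x) - round (-x)) by ring, abs_neg]
  rw [e1] at h1; rw [e2] at h2; linarith

lemma nint_le_abs (x : ℝ) : nint x ≤ |x| := by simpa using nint_le x 0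

lemma nint_nat_mul (a : ℕ) (x : ℝ) : nint ((a:ℝ) * x) ≤ (a:ℝ) * nint x := by
  calc nint ((a:ℝ)*x) ≤ |(a:ℝ)*x - (((a:ℕ) * round x : ℤ) : ℝ)| := nint_le _ _
    _ = (a:ℝ) * |x - round x| := by
        push_cast
        rw [← mul_sub, abs_mul, Nat.abs_cast]
    _ = (a:ℝ) * nint x := rfl

lemma torusDist_ge_fst (p q : ℝ × ℝ) : nint (p.1 - q.1) ≤ torusDist p q := by
  apply le_ciInf
  intro m
  have h1 : nint (p.1 - q.1) ≤ |p.1 - q.1 - m.1| := nint_le _ _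
  have h2 : |p.1 - q.1 - (m.1:ℝ)| ≤ Real.sqrt ((p.1 - q.1 - m.1)^2 + (p.2 - q.2 - m.2)^2) := by
    rw [← Real.sqrt_sq_eq_abs]
    exact Real.sqrt_le_sqrt (by nlinarith [sq_nonneg (p.2 - q.2 - (m.2:ℝ))])
  linarith

lemma torusDist_ge_snd (p q : ℝ × ℝ) : nint (p.2 - q.2) ≤ torusDist p q := by
  apply le_ciInf
  intro m
  have h1 : nint (p.2 - q.2) ≤ |p.2 - q.2 - m.2| := nint_le _ _
  have h2 : |p.2 - q.2 - (m.2:ℝ)| ≤ Real.sqrt ((p.1 - q.1 - m.1)^2 + (p.2 - q.2 - m.2)^2) := by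
    rw [← Real.sqrt_sq_eq_abs]
    exact Real.sqrt_le_sqrt (by nlinarith [sq_nonneg (p.1 - q.1 - (m.1:ℝ))])
  linarith

lemma nint_int_div (q : ℕ) (hq : 1 ≤ q) (j : ℤ) (hj0 : j ≠ 0) (hj : |j| < 2*q) :
    1/(2*(q:ℝ)) ≤ nint ((j:ℝ)/(2*(q:ℝ))) := by
  have hq0 : (0:ℝ) < 2*(q:ℝ) := by positivity
  set m := round ((j:ℝ)/(2*(q:ℝ))) with hm
  have key : (1:ℝ) ≤ |(j:ℝ) - 2*(q:ℝ)*m| := by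
    have hne : j - 2*(q:ℤ)*m ≠ 0 := by
      intro h
      have hj' : j = 2*(q:ℤ)*m := by omega
      rcases eq_or_ne m 0 with hm0 | hm0
      · rw [hm0, mul_zero] at hj'; exact hj0 hj'
      · have : 2*(q:ℤ) ≤ |j| := by
          rw [hj', abs_mul]
          have h1 : (1:ℤ) ≤ |m| := Int.one_le_abs hm0
          have h2 : |2*(q:ℤ)| = 2*(q:ℤ) := abs_of_pos (by omega)
          nlinarith
        omega
    calc (1:ℝ) ≤ ((|j - 2*(q:ℤ)*m| : ℤ) : ℝ) := by exact_mod_cast Int.one_le_abs hne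
      _ = |(j:ℝ) - 2*(q:ℝ)*m| := by push_cast; rfl
  have e : nint ((j:ℝ)/(2*(q:ℝ))) = |(j:ℝ) - 2*(q:ℝ)*m|/(2*(q:ℝ)) := by
    unfold nint
    rw [← hm, show (j:ℝ)/(2*(q:ℝ)) - m = ((j:ℝ) - 2*(q:ℝ)*m)/(2*(q:ℝ)) by field_simp,
      abs_div, abs_of_pos hq0]
  rw [e]
  gcongr

lemma gap_lemma (q : ℕ) (hq : 1 ≤ q) (f : ℕ → ℝ) :
    ∃ z : ℝ, ∀ b < q, 1/(4*(q:ℝ)) ≤ nint (z - f b) := by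
  by_contra hcon
  push_neg at hcon
  choose g hg1 hg2 using hcon
  set cpt : ℕ → ℝ := fun k => ((2*k+1 : ℕ) : ℝ)/(4*(q:ℝ)) with hcpt
  have hinj : Set.InjOn (fun k => g (cpt k)) (Finset.range (2*q)) := by
    intro k hk k' hk' hgk
    by_contra hne
    simp only [Finset.coe_range, Set.mem_Iio] at hk hk'
    set b := g (cpt k) with hb
    have h1 : nint (cpt k - f b) < 1/(4*(q:ℝ)) := hg2 _
    have hgk' : g (cpt k) = g (cpt k') := hgk
    have h2 : nint (cpt k' - f b) < 1/(4*(q:ℝ)) := by rw [hb, hgk']; exact hg2 _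
    have h3 : nint (cpt k - cpt k') ≤ nint (cpt k - f b) + nint (cpt k' - f b) := by
      have h := nint_add (cpt k - f b) (f b - cpt k')
      rw [show (cpt k - f b) + (f b - cpt k') = cpt k - cpt k' by ring] at h
      rw [show f b - cpt k' = -(cpt k' - f b) by ring, nint_neg] at h
      exact h
    have hj0 : (k:ℤ) - k' ≠ 0 := by
      intro h; apply hne; omega
    have hjlt : |(k:ℤ) - k'| < 2*q := by
      rw [abs_lt]; constructor <;> [omega; omega]
    have h4 : 1/(2*(q:ℝ)) ≤ nint (cpt k - cpt k') := by
      have e : cpt k - cpt k' = (((k:ℤ) - k' : ℤ):ℝ)/(2*(q:ℝ)) := by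
        rw [hcpt]
        have hq0 : (q:ℝ) ≠ 0 := by positivity
        push_cast
        field_simp
        ring
      rw [e]
      exact nint_int_div q hq _ hj0 hjlt
    have hq0 : (0:ℝ) < q := by exact_mod_cast hq
    have : 1/(2*(q:ℝ)) = 1/(4*(q:ℝ)) + 1/(4*(q:ℝ)) := by ring
    linarith
  have hmaps : ∀ k ∈ Finset.range (2*q), g (cpt k) ∈ Finset.range q := by
    intro k _; exact Finset.mem_range.mpr (hg1 _)
  have hcard := Finset.card_le_card_of_injOn _ hmaps hinj
  simp only [Finset.card_range] at hcard
  omega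

set_option maxHeartbeats 1000000 in
theorem stmt_4 (α : ℝ) (hirr : Irrational α)
    (hnotbad : ∀ ε > (0 : ℝ), ∃ q : ℕ, 1 ≤ q ∧ (q : ℝ) * nint ((q : ℝ) * α) < ε) :
    ∀ c > (0 : ℝ), ∃ x y : ℝ, ∃ T > (0 : ℝ), ∃ z : ℝ × ℝ,
      ∀ t ∈ Set.Icc (0 : ℝ) (c * T), 1 / T < torusDist z (x + t * α, y + t) := by
  intro c hc
  set K : ℝ := 8 * (1 + |α|) with hK
  have hK8 : (8:ℝ) ≤ K := by nlinarith [abs_nonneg α]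
  have hKpos : (0:ℝ) < K := by linarith
  have hcK2 : (0:ℝ) < c*K + 2 := by nlinarith
  set ε : ℝ := 1 / (8 * (c*K + 2)) with hε
  have hεpos : 0 < ε := by rw [hε]; positivity
  obtain ⟨q, hq1, hqε⟩ := hnotbad ε hεpos
  have hq0 : (0:ℝ) < q := by exact_mod_cast hq1
  set δ := nint ((q:ℝ) * α) with hδ
  have hδ0 : 0 ≤ δ := nint_nonneg _
  clear_value K ε δ
  obtain ⟨z₁, hz⟩ := gap_lemma q hq1 (fun b => (b:ℝ) * α)
  refine ⟨0, 0, K * (q:ℝ), by positivity, (z₁, 0), ?_⟩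
  intro t ht
  set T : ℝ := K * q with hT
  clear_value T
  have hTpos : (0:ℝ) < T := by rw [hT]; positivity
  have hT8 : (8:ℝ) ≤ T := by
    have hq1' : (1:ℝ) ≤ q := by exact_mod_cast hq1
    calc (8:ℝ) = 8 * 1 := by ring
      _ ≤ K * q := mul_le_mul hK8 hq1' (by norm_num) (le_of_lt hKpos)
      _ = T := hT.symm
  have hT1 : 1/T ≤ 1/8 := by
    rw [div_le_div_iff₀ hTpos (by norm_num)]; linarith
  by_cases hcase : nint t ≤ 1/T
  · -- hard case: t is near an integer n; use the x-coordinate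
    have ht0 : 0 ≤ t := ht.1
    have htc : t ≤ c * T := ht.2
    have hnt : |t - (round t : ℝ)| ≤ 1/T := hcase
    have hnt' := abs_le.mp hnt
    have hr0 : 0 ≤ round t := by
      by_contra h
      push_neg at h
      have : ((round t : ℤ) : ℝ) ≤ -1 := by exact_mod_cast (by omega : round t ≤ -1)
      linarith
    set n : ℕ := (round t).toNat with hn
    have hnr : (n:ℝ) = (round t : ℝ) := by exact_mod_cast Int.toNat_of_nonneg hr0
    have hnle : (n:ℝ) ≤ c*T + 1 := by rw [hnr]; linarith
    set a := n / q with ha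
    set b := n % q with hb
    have hbq : b < q := Nat.mod_lt _ (by omega)
    have hnab : q * a + b = n := Nat.div_add_mod n q
    have hncast : (n:ℝ) = (q:ℝ)*(a:ℝ) + (b:ℝ) := by exact_mod_cast hnab.symm
    -- triangle inequalities
    have hgap : 1/(4*(q:ℝ)) ≤ nint (z₁ - (b:ℝ)*α) := hz b hbq
    have htri : nint (z₁ - (b:ℝ)*α) ≤ nint (z₁ - t*α) + nint (t*α - (b:ℝ)*α) := by
      have h := nint_add (z₁ - t*α) (t*α - (b:ℝ)*α)
      rwa [show (z₁ - t*α) + (t*α - (b:ℝ)*α) = z₁ - (b:ℝ)*α by ring] at h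
    have hsplit : nint (t*α - (b:ℝ)*α) ≤ nint ((t - (n:ℝ))*α) + nint ((a:ℝ) * ((q:ℝ)*α)) := by
      have h := nint_add ((t - (n:ℝ))*α) ((a:ℝ)*((q:ℝ)*α))
      rwa [show ((t - (n:ℝ))*α) + ((a:ℝ)*((q:ℝ)*α)) = t*α - (b:ℝ)*α by
        linear_combination (-α) * hncast] at h
    have hb1 : nint ((t - (n:ℝ))*α) ≤ |α|/T := by
      calc nint ((t - (n:ℝ))*α) ≤ |(t - (n:ℝ))*α| := nint_le_abs _
        _ = |t - (n:ℝ)| * |α| := abs_mul _ _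
        _ ≤ (1/T) * |α| := by
            apply mul_le_mul_of_nonneg_right _ (abs_nonneg α)
            rw [hnr]; exact hnt
        _ = |α|/T := by ring
    have haq : (a:ℝ) ≤ (c*T+1)/(q:ℝ) := by
      rw [le_div_iff₀ hq0]
      have : (q:ℝ)*(a:ℝ) ≤ (n:ℝ) := by
        rw [hncast]; linarith [show (0:ℝ) ≤ (b:ℝ) from Nat.cast_nonneg b]
      linarith [this, hnle]
    have hb2 : nint ((a:ℝ) * ((q:ℝ)*α)) ≤ (c*K + 1) * ε / (q:ℝ) := by
      have h1 : nint ((a:ℝ) * ((q:ℝ)*α)) ≤ (a:ℝ) * δ := by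
        rw [hδ]; exact nint_nat_mul a _
      have hδq : δ ≤ (q:ℝ)*δ := by
        nlinarith [mul_nonneg (sub_nonneg.mpr (show (1:ℝ) ≤ (q:ℝ) from by exact_mod_cast hq1)) hδ0]
      have h2 : (a:ℝ) * δ ≤ ((c*T+1)/(q:ℝ)) * δ := mul_le_mul_of_nonneg_right haq hδ0
      have h3 : (c*T+1) * δ ≤ (c*K+1)*ε := by
        have h4 : c*K*((q:ℝ)*δ) ≤ c*K*ε :=
          mul_le_mul_of_nonneg_left (le_of_lt hqε) (le_of_lt (mul_pos hc hKpos))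
        have h5 : c*T*δ = c*K*((q:ℝ)*δ) := by rw [hT]; ring
        nlinarith
      have h6 : ((c*T+1)/(q:ℝ)) * δ ≤ (c*K+1)*ε/(q:ℝ) := by
        rw [div_mul_eq_mul_div, div_le_div_iff₀ hq0 hq0]
        nlinarith
      linarith
    have hε8 : (c*K+1) * ε < 1/8 := by
      rw [hε, mul_one_div, div_lt_div_iff₀ (by positivity) (by norm_num)]
      nlinarith
    have h18 : 1/T + |α|/T = 1/(8*(q:ℝ)) := by
      rw [← add_div, hT, hK]
      rw [div_eq_div_iff (by positivity) (by positivity)]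
      ring
    have hε8q : (c*K+1)*ε/(q:ℝ) < 1/(8*(q:ℝ)) := by
      rw [div_lt_div_iff₀ hq0 (by positivity)]
      nlinarith
    have hsum : 1/(8*(q:ℝ)) + 1/(8*(q:ℝ)) = 1/(4*(q:ℝ)) := by ring
    have hfinal : 1/T < nint (z₁ - t*α) := by linarith
    have hle : nint (z₁ - t*α) ≤ torusDist (z₁, 0) (0 + t*α, 0 + t) := by
      have h := torusDist_ge_fst (z₁, 0) (0 + t*α, 0 + t)
      simpa using h
    linarith
  · -- easy case: t is far from integers; use the y-coordinate
    push_neg at hcase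
    have h := torusDist_ge_snd (z₁, 0) (0 + t*α, 0 + t)
    have e : nint ((z₁, (0:ℝ)).2 - ((0:ℝ) + t*α, (0:ℝ) + t).2) = nint t := by
      simp only
      rw [show (0:ℝ) - (0 + t) = -t by ring, nint_neg]
    rw [e] at h
    linarith
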